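/- (Scalar characterization of the decoupled LMI) Let t = (t₁, …, tₘ) be a weight vector with tᵢ ≥ 0 and Σᵢ tᵢ = 1, let η > 0, and set λᵢ = η tᵢ for i = 1, …, m. Then the (n+1)×(n+1) block matrix M(λ) is positive semidefinite if and only if 1/η ≥ 1 − δ_t, i.e., 1 − η(1 − δ_t) ≥ 0. -/

import Mathlib

open Matrix

/-- The symmetric `(n+1) × (n+1)` block matrix `M(λ)` of the decoupled SDP relaxation:
`[[1 - Σᵢλᵢ + ΣᵢλᵢxᵢᵀPᵢ⁻¹xᵢ, (ΣᵢλᵢPᵢ⁻¹xᵢ)ᵀ], [ΣᵢλᵢPᵢ⁻¹xᵢ, ΣᵢλᵢPᵢ⁻¹]]`. -/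
noncomputable def decoupledBlockM {n m : ℕ} (x : Fin m → (Fin n → ℝ))
    (P : Fin m → Matrix (Fin n) (Fin n) ℝ) (lam : Fin m → ℝ) :
    Matrix (Unit ⊕ Fin n) (Unit ⊕ Fin n) ℝ :=
  Matrix.fromBlocks
    (Matrix.of fun _ _ => 1 - (∑ i, lam i) + ∑ i, lam i * (x i ⬝ᵥ ((P i)⁻¹ *ᵥ x i)))
    (Matrix.replicateRow Unit (∑ i, lam i • ((P i)⁻¹ *ᵥ x i)))
    (Matrix.replicateCol Unit (∑ i, lam i • ((P i)⁻¹ *ᵥ x i)))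
    (∑ i, lam i • (P i)⁻¹)

/-- Sum of matrices applied to a vector. -/
lemma aux_sum_mulVec {ι k l : Type*} [Fintype ι] [Fintype l]
    (A : ι → Matrix k l ℝ) (v : l → ℝ) :
    (∑ i, A i) *ᵥ v = ∑ i, A i *ᵥ v := by
  ext j
  simp only [Matrix.mulVec, dotProduct, Finset.sum_apply, Matrix.sum_apply,
    Finset.sum_mul]
  exact Finset.sum_comm

/-- Dot product with a sum of vectors. -/
lemma aux_dotProduct_sum {ι k : Type*} [Fintype ι] [Fintype k]
    (v : k → ℝ) (w : ι → (k → ℝ)) :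
    v ⬝ᵥ (∑ i, w i) = ∑ i, v ⬝ᵥ w i := by
  simp only [dotProduct, Finset.sum_apply, Finset.mul_sum]
  exact Finset.sum_comm

/-- A `Unit × Unit` real matrix is PSD iff its single entry is nonnegative. -/
lemma unit_posSemidef_iff (M : Matrix Unit Unit ℝ) :
    M.PosSemidef ↔ 0 ≤ M () () := by
  constructor
  · intro h
    simpa [dotProduct, Matrix.mulVec] using h.dotProduct_mulVec_nonneg (fun _ => 1)
  · intro h
    refine Matrix.PosSemidef.of_dotProduct_mulVec_nonneg ?_ fun v => ?_
    · ext i j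
      simp [Matrix.conjTranspose_apply]
    · have hv : star v ⬝ᵥ M *ᵥ v = M () () * (v () * v ()) := by
        simp [dotProduct, Matrix.mulVec]
        ring
      rw [hv]
      exact mul_nonneg h (mul_self_nonneg _)

/-- A positive multiple of a real positive definite matrix is positive definite. -/
lemma aux_posDef_smul {k : Type*} [Fintype k] {M : Matrix k k ℝ} (hM : M.PosDef)
    {c : ℝ} (hc : 0 < c) : (c • M).PosDef := by
  refine Matrix.posDef_iff_dotProduct_mulVec.mpr ⟨?_, fun v hv => ?_⟩
  · show (c • M)ᴴ = c • M
    rw [Matrix.conjTranspose_smul, hM.isHermitian.eq, star_trivial]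
  · rw [Matrix.smul_mulVec, dotProduct_smul, smul_eq_mul]
    exact mul_pos hc (hM.dotProduct_mulVec_pos hv)

theorem decoupled_LMI_scalar_characterization (n m : ℕ) (hn : 0 < n) (hm : 0 < m)
    (x : Fin m → (Fin n → ℝ)) (P : Fin m → Matrix (Fin n) (Fin n) ℝ)
    (hP : ∀ i, (P i).PosDef)
    (t : Fin m → ℝ) (ht : ∀ i, 0 ≤ t i) (hts : ∑ i, t i = 1)
    (η : ℝ) (hη : 0 < η)
    (lam : Fin m → ℝ) (hlam : ∀ i, lam i = η * t i)
    (Ptinv : Matrix (Fin n) (Fin n) ℝ) (hPtinv : Ptinv = ∑ i, t i • (P i)⁻¹)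
    (xt : Fin n → ℝ) (hxt : xt = Ptinv⁻¹ *ᵥ (∑ i, t i • ((P i)⁻¹ *ᵥ x i)))
    (δ : ℝ) (hδ : δ = (∑ i, t i * (x i ⬝ᵥ ((P i)⁻¹ *ᵥ x i))) - xt ⬝ᵥ (Ptinv *ᵥ xt)) :
    (decoupledBlockM x P lam).PosSemidef ↔ 1 - η * (1 - δ) ≥ 0 := by
  have hQ : ∀ i, ((P i)⁻¹).PosDef := fun i => (hP i).inv
  -- Ptinv is positive definite
  have hPt : Ptinv.PosDef := by
    obtain ⟨j, hj⟩ : ∃ j, t j ≠ 0 := by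
      by_contra hc
      push_neg at hc
      simp [hc] at hts
    have hjpos : 0 < t j := lt_of_le_of_ne (ht j) (Ne.symm hj)
    refine Matrix.posDef_iff_dotProduct_mulVec.mpr ⟨?_, fun v hv => ?_⟩
    · show Ptinvᴴ = Ptinv
      rw [hPtinv, Matrix.conjTranspose_sum]
      refine Finset.sum_congr rfl fun i _ => ?_
      rw [Matrix.conjTranspose_smul, (hQ i).isHermitian.eq, star_trivial]
    · rw [hPtinv, aux_sum_mulVec, aux_dotProduct_sum]
      have hterm : ∀ i, star v ⬝ᵥ (t i • (P i)⁻¹) *ᵥ v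
          = t i * (star v ⬝ᵥ (P i)⁻¹ *ᵥ v) := fun i => by
        rw [Matrix.smul_mulVec, dotProduct_smul, smul_eq_mul]
      refine Finset.sum_pos' (fun i _ => ?_) ⟨j, Finset.mem_univ j, ?_⟩
      · rw [hterm i]
        exact mul_nonneg (ht i) (le_of_lt ((hQ i).dotProduct_mulVec_pos hv))
      · rw [hterm j]
        exact mul_pos hjpos ((hQ j).dotProduct_mulVec_pos hv)
  have hdet : IsUnit Ptinv.det := hPt.det_pos.ne'.isUnit
  -- abbreviations
  set s : Fin n → ℝ := ∑ i, t i • ((P i)⁻¹ *ᵥ x i) with hs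
  -- the lower-right block is η • Ptinv
  have hD : (∑ i, lam i • (P i)⁻¹) = η • Ptinv := by
    rw [hPtinv, Finset.smul_sum]
    exact Finset.sum_congr rfl fun i _ => by rw [hlam, mul_smul]
  have hv : (∑ i, lam i • ((P i)⁻¹ *ᵥ x i)) = η • s := by
    rw [hs, Finset.smul_sum]
    exact Finset.sum_congr rfl fun i _ => by rw [hlam, mul_smul]
  have hDpd : (η • Ptinv).PosDef := aux_posDef_smul hPt hη
  haveI : Invertible (η • Ptinv) := hDpd.isUnit.invertible
  haveI : Invertible η := invertibleOfNonzero hη.ne'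
  -- inverse of the block
  have hDinv : (η • Ptinv)⁻¹ = η⁻¹ • Ptinv⁻¹ := by
    apply Matrix.inv_eq_right_inv
    rw [Matrix.smul_mul, Matrix.mul_smul, Matrix.mul_nonsing_inv _ hdet, smul_smul]
    simp [mul_inv_cancel₀ hη.ne']
  -- Ptinv *ᵥ xt = s
  have hPs : Ptinv *ᵥ xt = s := by
    rw [hxt, Matrix.mulVec_mulVec, Matrix.mul_nonsing_inv _ hdet, Matrix.one_mulVec]
  -- key scalar identities
  have hkey : s ⬝ᵥ (Ptinv⁻¹ *ᵥ s) = xt ⬝ᵥ (Ptinv *ᵥ xt) := by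
    rw [← hxt, hPs, dotProduct_comm]
  -- rewrite the matrix in fromBlocks-with-conjTranspose form
  have hform : decoupledBlockM x P lam =
      Matrix.fromBlocks
        (Matrix.of fun _ _ => 1 - (∑ i, lam i) + ∑ i, lam i * (x i ⬝ᵥ ((P i)⁻¹ *ᵥ x i)))
        (Matrix.replicateRow Unit (η • s)) (Matrix.replicateRow Unit (η • s))ᴴ (η • Ptinv) := by
    rw [decoupledBlockM, conjTranspose_replicateRow, star_trivial, hv, hD]
  rw [hform, Matrix.PosDef.fromBlocks₂₂ _ _ hDpd, unit_posSemidef_iff]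
  -- compute the Schur-complement entry
  have hrowcol : (Matrix.replicateRow Unit (η • s) * (η • Ptinv)⁻¹ * (Matrix.replicateRow Unit (η • s))ᴴ) () ()
      = (η • s) ⬝ᵥ ((η • Ptinv)⁻¹ *ᵥ (η • s)) := by
    rw [conjTranspose_replicateRow, star_trivial]
    rw [Matrix.mul_assoc]
    simp [Matrix.mul_apply, Matrix.replicateRow, Matrix.replicateCol, Matrix.mulVec, dotProduct,
      Finset.mul_sum]
  have hentry : ((Matrix.of (fun _ _ => 1 - (∑ i, lam i) + ∑ i, lam i * (x i ⬝ᵥ ((P i)⁻¹ *ᵥ x i)))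
        : Matrix Unit Unit ℝ)
      - Matrix.replicateRow Unit (η • s) * (η • Ptinv)⁻¹ * (Matrix.replicateRow Unit (η • s))ᴴ) () ()
      = 1 - η * (1 - δ) := by
    rw [Matrix.sub_apply, hrowcol, hDinv]
    have h1 : ∑ i, lam i = η := by
      simp only [hlam, ← Finset.mul_sum, hts, mul_one]
    have h2 : ∑ i, lam i * (x i ⬝ᵥ ((P i)⁻¹ *ᵥ x i))
        = η * ∑ i, t i * (x i ⬝ᵥ ((P i)⁻¹ *ᵥ x i)) := by
      rw [Finset.mul_sum]
      exact Finset.sum_congr rfl fun i _ => by rw [hlam, mul_assoc]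
    have h3 : (η • s) ⬝ᵥ ((η⁻¹ • Ptinv⁻¹) *ᵥ (η • s))
        = η * (s ⬝ᵥ (Ptinv⁻¹ *ᵥ s)) := by
      rw [Matrix.smul_mulVec, Matrix.mulVec_smul, smul_dotProduct,
        dotProduct_smul, dotProduct_smul]
      simp only [smul_eq_mul]
      field_simp
    rw [Matrix.of_apply, h1, h2, h3, hkey, hδ]
    ring
  rw [hentry]
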